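/- (Kruskal–Katona cross intersecting version) If 𝒜 ⊆ binomial([n],k) and ℬ ⊆ binomial([n],ℓ) are cross intersecting, then ℒ(|𝒜|, k) and ℒ(|ℬ|, ℓ) are cross intersecting, where ℒ(r, k) denotes the first r sets of binomial([n],k) in lexicographic order. -/

import Mathlib

attribute [-instance] instDecidableEqFin


open Finset

/-- Lexicographic order on finite sets: `A ≼ B` iff `A ⊇ B` or `min (A \ B) < min (B \ A)`. -/
def lexLE (A B : Finset ℕ) : Prop := B ⊆ A ∨ (A \ B).min < (B \ A).min

instance : DecidableRel lexLE := fun A B => by unfold lexLE; infer_instance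

/-- The family of all `k`-element subsets of `[n] = {1,…,n}`. -/
def ksubsets (n k : ℕ) : Finset (Finset ℕ) := (Finset.Icc 1 n).powersetCard k

/-- Two families are cross intersecting. -/
def crossInt (A B : Finset (Finset ℕ)) : Prop := ∀ X ∈ A, ∀ Y ∈ B, (X ∩ Y).Nonempty

/-- `ℒ([n], R, k)`: all `k`-subsets of `[n]` lexicographically no more than `R`. -/
def Lfam (n : ℕ) (R : Finset ℕ) (k : ℕ) : Finset (Finset ℕ) :=
  (ksubsets n k).filter (fun F => lexLE F R)

/-- `ℒ([n], r, k)`: the first `r` sets of `binomial([n],k)` in lexicographic order. -/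
def Lnum (n r k : ℕ) : Finset (Finset ℕ) :=
  (ksubsets n k).filter (fun F => ((ksubsets n k).filter (fun G => lexLE G F)).card ≤ r)

/-- `F` and `H` are partners: they strongly intersect at their last element. -/
def isPartner (F H : Finset ℕ) : Prop := ∃ q, F ∩ H = {q} ∧ F ∪ H = Finset.Icc 1 q

/-- `K` is the `k`-partner of `F` (inside `[n]`). -/
def isKPartner (n : ℕ) (F : Finset ℕ) (k : ℕ) (K : Finset ℕ) : Prop :=
  ∃ H, isPartner F H ∧
    ((k = H.card ∧ K = H) ∨
     (H.card < k ∧ K = H ∪ Finset.Icc (n - k + H.card + 1) n) ∨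
     (k < H.card ∧ K ∈ ksubsets n k ∧ lexLE K H ∧
        ∀ K' ∈ ksubsets n k, lexLE K' H → lexLE K' K))

/-- `ℓ(F)`: the length of the maximal tail interval `[n-ℓ+1, n] ⊆ F`. -/
def tailLen (n : ℕ) (F : Finset ℕ) : ℕ :=
  ((Finset.range (n + 1)).filter (fun x => Finset.Icc (n - x + 1) n ⊆ F)).sup id

/-- `F^t = [n - ℓ(F) + 1, n]`. -/
def tailSet (n : ℕ) (F : Finset ℕ) : Finset ℕ := Finset.Icc (n - tailLen n F + 1) n

/-- `𝒜` (a family of `f`-subsets of `[n]`) is maximal with respect to `ℬ`. -/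
def maximalTo (n f : ℕ) (A B : Finset (Finset ℕ)) : Prop :=
  ∀ A' ⊆ ksubsets n f, A ⊆ A' → crossInt A' B → A' = A

/-- The pair of sets `(A, B)` is maximal. -/
def pairMaximal (n : ℕ) (A B : Finset ℕ) : Prop :=
  crossInt (Lfam n A A.card) (Lfam n B B.card) ∧
  maximalTo n A.card (Lfam n A A.card) (Lfam n B B.card) ∧
  maximalTo n B.card (Lfam n B B.card) (Lfam n A A.card)

/-- `A` is the `|A|`-parity of `B`: same set after removing tails, and
`ℓ(B) - ℓ(A) = |B| - |A|` (stated additively). -/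
def isParity (n : ℕ) (A B : Finset ℕ) : Prop :=
  A \ tailSet n A = B \ tailSet n B ∧ tailLen n A + B.card = tailLen n B + A.card



lemma lexLE_refl (S : Finset ℕ) : lexLE S S := Or.inl Finset.Subset.rfl

lemma lexLE_iff (S T : Finset ℕ) : lexLE S T ↔ ∀ y ∈ T \ S, ∃ x ∈ S \ T, x < y := by
  constructor
  · rintro (h | h) y hy
    · rw [mem_sdiff] at hy; exact absurd (h hy.1) hy.2
    · have hne : (S \ T).Nonempty := by
        rcases (S \ T).eq_empty_or_nonempty with he | hne
        · rw [he, Finset.min_empty] at h; exact absurd h not_top_lt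
        · exact hne
      refine ⟨(S \ T).min' hne, min'_mem _ _, ?_⟩
      have h1 : ((S \ T).min' hne : WithTop ℕ) = (S \ T).min := coe_min' hne
      have h2 : (T \ S).min ≤ (y : WithTop ℕ) := min_le hy
      have := lt_of_lt_of_le (h1 ▸ h) h2
      exact_mod_cast this
  · intro h
    rcases (T \ S).eq_empty_or_nonempty with he | hne
    · left; rwa [sdiff_eq_empty_iff_subset] at he
    · right
      obtain ⟨x, hx, hxy⟩ := h _ (min'_mem _ hne)
      calc (S \ T).min ≤ (x : WithTop ℕ) := min_le hx
        _ < ((T \ S).min' hne : WithTop ℕ) := by exact_mod_cast hxy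
        _ = (T \ S).min := coe_min' hne

def eF (m : ℕ) (x : ℕ) : Fin (m+1) := ⟨min (m+1-x) m, by omega⟩

def gF (m : ℕ) (i : Fin (m+1)) : ℕ := m + 1 - i.val

lemma eF_val {m x : ℕ} (hx : x ∈ Icc 1 (m+1)) : (eF m x).val = m+1-x := by
  rw [mem_Icc] at hx; simp only [eF]; omega

lemma gF_mem (m : ℕ) (i : Fin (m+1)) : gF m i ∈ Icc 1 (m+1) := by
  have := i.isLt; rw [mem_Icc]; unfold gF; omega

lemma gF_eF {m x : ℕ} (hx : x ∈ Icc 1 (m+1)) : gF m (eF m x) = x := by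
  have h := eF_val hx; rw [mem_Icc] at hx; unfold gF; omega

lemma eF_gF (m : ℕ) (i : Fin (m+1)) : eF m (gF m i) = i := by
  have h := eF_val (gF_mem m i)
  have := i.isLt
  apply Fin.ext; unfold gF at h ⊢; omega

lemma gF_inj (m : ℕ) : Function.Injective (gF m) := by
  intro i j h
  rw [← eF_gF m i, ← eF_gF m j, h]

lemma eF_le {m x y : ℕ} (hx : x ∈ Icc 1 (m+1)) (hy : y ∈ Icc 1 (m+1)) :
    eF m y ≤ eF m x ↔ x ≤ y := by
  rw [Fin.le_def, eF_val hx, eF_val hy, mem_Icc] at *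
  omega

lemma mem_E {m : ℕ} {S : Finset ℕ} (hS : S ⊆ Icc 1 (m+1)) {x : ℕ} (hx : x ∈ Icc 1 (m+1)) :
    eF m x ∈ S.image (eF m) ↔ x ∈ S := by
  constructor
  · intro h
    obtain ⟨t, htS, het⟩ := mem_image.1 h
    have : t = x := by rw [← gF_eF (hS htS), ← gF_eF hx, het]
    exact this ▸ htS
  · exact fun h => mem_image_of_mem _ h

lemma E_injOn {m : ℕ} {S T : Finset ℕ} (hS : S ⊆ Icc 1 (m+1)) (hT : T ⊆ Icc 1 (m+1))
    (h : S.image (eF m) = T.image (eF m)) : S = T := by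
  ext x
  constructor
  · intro hx
    have := (mem_E hT (hS hx)).1 (h ▸ mem_image_of_mem _ hx)
    exact this
  · intro hx
    exact (mem_E hS (hT hx)).1 (h.symm ▸ mem_image_of_mem _ hx)

lemma card_E {m : ℕ} {S : Finset ℕ} (hS : S ⊆ Icc 1 (m+1)) :
    (S.image (eF m)).card = S.card := by
  apply card_image_of_injOn
  intro x hx y hy hxy
  rw [← gF_eF (hS hx), ← gF_eF (hS hy), hxy]

lemma g_image_E {m : ℕ} (W : Finset (Fin (m+1))) :
    (W.image (gF m)).image (eF m) = W := by
  rw [image_image]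
  have : ∀ i ∈ W, (eF m ∘ gF m) i = id i := fun i _ => eF_gF m i
  rw [image_congr this, image_id]

lemma g_image_subset {m : ℕ} (W : Finset (Fin (m+1))) : W.image (gF m) ⊆ Icc 1 (m+1) := by
  intro x hx
  obtain ⟨i, _, rfl⟩ := mem_image.1 hx
  exact gF_mem m i

lemma lex_colex {m : ℕ} {S T : Finset ℕ} (hS : S ⊆ Icc 1 (m+1)) (hT : T ⊆ Icc 1 (m+1)) :
    lexLE S T ↔ toColex (T.image (eF m)) ≤ toColex (S.image (eF m)) := by
  rw [lexLE_iff, Finset.Colex.toColex_le_toColex]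
  constructor
  · intro h a haT haS
    obtain ⟨y, hyT, rfl⟩ := mem_image.1 haT
    have hyS : y ∉ S := fun hyS => haS (mem_image_of_mem _ hyS)
    obtain ⟨x, hx, hxy⟩ := h y (mem_sdiff.2 ⟨hyT, hyS⟩)
    rw [mem_sdiff] at hx
    refine ⟨eF m x, mem_image_of_mem _ hx.1, ?_, ?_⟩
    · intro hc
      exact hx.2 ((mem_E hT (hS hx.1)).1 hc)
    · exact (eF_le (hS hx.1) (hT hyT)).2 hxy.le
  · intro h y hy
    rw [mem_sdiff] at hy
    have haT := mem_image_of_mem (eF m) hy.1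
    have haS : eF m y ∉ S.image (eF m) := fun hc => hy.2 ((mem_E hS (hT hy.1)).1 hc)
    obtain ⟨b, hbS, hbT, hba⟩ := h haT haS
    obtain ⟨x, hxS, rfl⟩ := mem_image.1 hbS
    have hxT : x ∉ T := fun hxT => hbT (mem_image_of_mem _ hxT)
    have hxy : x ≤ y := (eF_le (hS hxS) (hT hy.1)).1 hba
    refine ⟨x, mem_sdiff.2 ⟨hxS, hxT⟩, lt_of_le_of_ne hxy ?_⟩
    rintro rfl
    exact hxT hy.1

lemma colex_compl_le {N : ℕ} {U V : Finset (Fin N)} (h : toColex U ≤ toColex V) :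
    toColex Vᶜ ≤ toColex Uᶜ := by
  rw [Finset.Colex.toColex_le_toColex] at h ⊢
  intro a haV haU
  obtain ⟨b, hbV, hbU, hab⟩ := h (by simpa using haU) (by simpa using haV)
  exact ⟨b, by simpa using hbU, by simpa using hbV, hab⟩

lemma isInitSeg_iterate {N : ℕ} {𝒜 : Finset (Finset (Fin N))} {r : ℕ}
    (h : Colex.IsInitSeg 𝒜 r) (d : ℕ) :
    Colex.IsInitSeg (Finset.shadow^[d] 𝒜) (r - d) := by
  induction d generalizing 𝒜 r with
  | zero => simpa
  | succ d ih =>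
    rw [Function.iterate_succ_apply]
    have := ih h.shadow
    have he : r - 1 - d = r - (d + 1) := by omega
    rwa [he] at this




lemma core (m k l : ℕ) (hkl : k + l ≤ m + 1)
    (A B : Finset (Finset ℕ))
    (hA : A ⊆ ksubsets (m+1) k) (hB : B ⊆ ksubsets (m+1) l)
    (h : crossInt A B)
    (X Y : Finset ℕ) (hX : X ∈ ksubsets (m+1) k) (hY : Y ∈ ksubsets (m+1) l)
    (hDx : ((ksubsets (m+1) k).filter (fun G => lexLE G X)).card ≤ A.card)
    (hDy : ((ksubsets (m+1) l).filter (fun G => lexLE G Y)).card ≤ B.card) :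
    (X ∩ Y).Nonempty := by
  by_contra hcon
  rw [not_nonempty_iff_eq_empty] at hcon
  obtain ⟨hXs, hXc⟩ := mem_powersetCard.1 hX
  obtain ⟨hYs, hYc⟩ := mem_powersetCard.1 hY
  set n := m + 1 with hn
  set E : Finset ℕ → Finset (Fin n) := fun S => S.image (eF m) with hE
  set Acal : Finset (Finset (Fin n)) := A.image (fun S => (E S)ᶜ) with hAcal
  set Dx : Finset (Finset ℕ) := (ksubsets n k).filter (fun G => lexLE G X) with hDxdef
  set Dy : Finset (Finset ℕ) := (ksubsets n l).filter (fun G => lexLE G Y) with hDydef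
  set C : Finset (Finset (Fin n)) := Dx.image (fun S => (E S)ᶜ) with hCdef
  set d : ℕ := n - k - l with hd
  -- cards of E-images
  have hcardE : ∀ S : Finset ℕ, S ⊆ Icc 1 n → (E S).card = S.card := fun S hS => card_E hS
  have hcardEc : ∀ S : Finset ℕ, S ⊆ Icc 1 n → ((E S)ᶜ).card = n - S.card := by
    intro S hS
    rw [card_compl, hcardE S hS, Fintype.card_fin]
  have hAmem : ∀ S ∈ A, S ⊆ Icc 1 n ∧ S.card = k := by
    intro S hS; exact mem_powersetCard.1 (hA hS)
  have hBmem : ∀ S ∈ B, S ⊆ Icc 1 n ∧ S.card = l := by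
    intro S hS; exact mem_powersetCard.1 (hB hS)
  have hDxmem : ∀ S ∈ Dx, (S ⊆ Icc 1 n ∧ S.card = k) ∧ lexLE S X := by
    intro S hS
    rw [hDxdef, mem_filter] at hS
    exact ⟨mem_powersetCard.1 hS.1, hS.2⟩
  have hDymem : ∀ S ∈ Dy, (S ⊆ Icc 1 n ∧ S.card = l) ∧ lexLE S Y := by
    intro S hS
    rw [hDydef, mem_filter] at hS
    exact ⟨mem_powersetCard.1 hS.1, hS.2⟩
  -- Sized
  have sizedA : (Acal : Set (Finset (Fin n))).Sized (n - k) := by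
    intro s hs
    rw [mem_coe, hAcal, mem_image] at hs
    obtain ⟨S, hS, rfl⟩ := hs
    rw [hcardEc S (hAmem S hS).1, (hAmem S hS).2]
  have cardA : Acal.card = A.card := by
    rw [hAcal]
    apply card_image_of_injOn
    intro S hS S' hS' hc
    exact E_injOn (hAmem S hS).1 (hAmem S' hS').1 (compl_inj_iff.1 hc)
  have hXmem : X ∈ Dx := by
    rw [hDxdef, mem_filter]
    exact ⟨hX, lexLE_refl X⟩
  have hCcard : C.card = Dx.card := by
    rw [hCdef]
    apply card_image_of_injOn
    intro S hS S' hS' hc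
    exact E_injOn (hDxmem S hS).1.1 (hDxmem S' hS').1.1 (compl_inj_iff.1 hc)
  have hcompl_card : ((E X)ᶜ).card = n - k := by rw [hcardEc X hXs, hXc]
  -- C is an initial segment of colex
  have hCinit : C = Colex.initSeg (E X)ᶜ := by
    ext W
    rw [hCdef, mem_image, Colex.mem_initSeg]
    constructor
    · rintro ⟨S, hS, rfl⟩
      obtain ⟨⟨hSs, hSc⟩, hlex⟩ := hDxmem S hS
      refine ⟨by rw [hcompl_card, hcardEc S hSs, hSc], ?_⟩
      exact colex_compl_le ((lex_colex hSs hXs).1 hlex)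
    · rintro ⟨hcard, hle⟩
      refine ⟨(Wᶜ).image (gF m), ?_, ?_⟩
      · have hW1 : ((Wᶜ).image (gF m)) ⊆ Icc 1 n := g_image_subset _
        have hW2 : E ((Wᶜ).image (gF m)) = Wᶜ := g_image_E _
        have hWcard : W.card = n - k := by rw [← hcard, hcompl_card]
        have hW3 : ((Wᶜ).image (gF m)).card = k := by
          rw [card_image_of_injective _ (gF_inj m), card_compl, Fintype.card_fin, hWcard]
          omega
        rw [hDxdef, mem_filter]
        refine ⟨mem_powersetCard.2 ⟨hW1, hW3⟩, ?_⟩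
        rw [lex_colex hW1 hXs, g_image_E]
        have := colex_compl_le hle
        rwa [compl_compl] at this
      · simp only [hE]
        rw [g_image_E, compl_compl]
  have hCinitseg : Colex.IsInitSeg C (n - k) := by
    rw [hCinit]
    have := Colex.isInitSeg_initSeg (s := (E X)ᶜ)
    rwa [hcompl_card] at this
  -- Kruskal--Katona
  have hKK : (Finset.shadow^[d] C).card ≤ (Finset.shadow^[d] Acal).card := by
    apply Finset.iterated_kk sizedA _ hCinitseg
    rw [hCcard, cardA]
    exact hDx
  -- shadow of Acal is disjoint from image of B
  have hdisj : Disjoint (Finset.shadow^[d] Acal) (B.image E) := by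
    rw [disjoint_right]
    intro W hWB hWS
    obtain ⟨B0, hB0, rfl⟩ := mem_image.1 hWB
    obtain ⟨s, hsA, hsub, -⟩ := mem_shadow_iterate_iff_exists_sdiff.1 hWS
    rw [hAcal, mem_image] at hsA
    obtain ⟨A0, hA0, rfl⟩ := hsA
    obtain ⟨z, hz⟩ := h A0 hA0 B0 hB0
    rw [mem_inter] at hz
    have h1 : eF m z ∈ E B0 := mem_image_of_mem _ hz.2
    have h2 : eF m z ∈ (E A0)ᶜ := hsub h1
    rw [Finset.mem_compl] at h2
    exact h2 (mem_image_of_mem _ hz.1)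
  have sizedS : ∀ W ∈ Finset.shadow^[d] Acal, W.card = l := by
    intro W hW
    have := sizedA.shadow_iterate (k := d) (mem_coe.2 hW)
    rw [this]
    omega
  have hBcard : (B.image E).card = B.card := by
    apply card_image_of_injOn
    intro S hS S' hS' hc
    exact E_injOn (hBmem S hS).1 (hBmem S' hS').1 hc
  have hbound : (Finset.shadow^[d] Acal).card + B.card ≤ (powersetCard l (univ : Finset (Fin n))).card := by
    rw [← hBcard, ← card_union_of_disjoint hdisj]
    apply card_le_card
    intro W hW
    rw [mem_powersetCard]
    refine ⟨subset_univ _, ?_⟩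
    rcases mem_union.1 hW with hW | hW
    · exact sizedS W hW
    · obtain ⟨S, hS, rfl⟩ := mem_image.1 hW
      rw [hcardE S (hBmem S hS).1, (hBmem S hS).2]
  -- E Y is in the iterated shadow of C
  have hEYsub : E Y ⊆ (E X)ᶜ := by
    intro w hw
    obtain ⟨y, hy, rfl⟩ := mem_image.1 hw
    rw [Finset.mem_compl]
    intro hc
    have : y ∈ X := (mem_E hXs (hYs hy)).1 hc
    have : y ∈ X ∩ Y := mem_inter.2 ⟨this, hy⟩
    rw [hcon] at this
    exact notMem_empty y this
  have hEYD : E Y ∈ Finset.shadow^[d] C := by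
    rw [mem_shadow_iterate_iff_exists_sdiff]
    refine ⟨(E X)ᶜ, ?_, hEYsub, ?_⟩
    · rw [hCdef]
      exact mem_image_of_mem _ hXmem
    · rw [card_sdiff_of_subset hEYsub, hcompl_card, hcardE Y hYs, hYc]
  have hDinit : Colex.IsInitSeg (Finset.shadow^[d] C) l := by
    have := isInitSeg_iterate hCinitseg d
    have he : n - k - d = l := by omega
    rwa [he] at this
  -- cover
  have hEYDy : E Y ∈ Dy.image E := by
    apply mem_image_of_mem
    rw [hDydef, mem_filter]
    exact ⟨hY, lexLE_refl Y⟩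
  have hcover : powersetCard l (univ : Finset (Fin n)) ⊆ (Finset.shadow^[d] C) ∪ Dy.image E := by
    intro W hW
    have hWc : W.card = l := (mem_powersetCard.1 hW).2
    rcases le_total (toColex W) (toColex (E Y)) with hle | hge
    · rcases eq_or_lt_of_le hle with heq | hlt
      · have : W = E Y := toColex_inj.1 heq
        rw [this]
        exact mem_union_left _ hEYD
      · exact mem_union_left _ (hDinit.2 hEYD ⟨hlt, hWc⟩)
    · apply mem_union_right
      have hW1 : (W.image (gF m)) ⊆ Icc 1 n := g_image_subset _
      have hW2 : E (W.image (gF m)) = W := g_image_E _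
      have hW3 : (W.image (gF m)).card = l := by
        rw [card_image_of_injective _ (gF_inj m), hWc]
      refine mem_image.2 ⟨W.image (gF m), ?_, hW2⟩
      rw [hDydef, mem_filter]
      refine ⟨mem_powersetCard.2 ⟨hW1, hW3⟩, ?_⟩
      rw [lex_colex hW1 hYs, g_image_E]
      exact hge
  -- final counting
  have h1 : (powersetCard l (univ : Finset (Fin n))).card ≤ ((Finset.shadow^[d] C) ∪ Dy.image E).card := card_le_card hcover
  have h2 := card_union_add_card_inter (Finset.shadow^[d] C) (Dy.image E)
  have h3 : 0 < ((Finset.shadow^[d] C) ∩ Dy.image E).card :=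
    card_pos.2 ⟨E Y, mem_inter.2 ⟨hEYD, hEYDy⟩⟩
  have h4 : (Dy.image E).card = Dy.card := by
    apply card_image_of_injOn
    intro S hS S' hS' hc
    exact E_injOn (hDymem S hS).1.1 (hDymem S' hS').1.1 hc
  omega

theorem stmt6 (n k l : ℕ) (A B : Finset (Finset ℕ))
    (hA : A ⊆ ksubsets n k) (hB : B ⊆ ksubsets n l)
    (h : crossInt A B) :
    crossInt (Lnum n A.card k) (Lnum n B.card l) := by
  intro X hX Y hY
  unfold Lnum at hX hY
  obtain ⟨hX1, hX2⟩ := mem_filter.1 hX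
  obtain ⟨hY1, hY2⟩ := mem_filter.1 hY
  by_cases hk : k = 0
  · exfalso
    subst hk
    have hXDx : X ∈ (ksubsets n 0).filter (fun G => lexLE G X) :=
      mem_filter.2 ⟨hX1, lexLE_refl X⟩
    have hApos : 0 < A.card := lt_of_lt_of_le (card_pos.2 ⟨X, hXDx⟩) hX2
    obtain ⟨A0, hA0⟩ := card_pos.1 hApos
    have hA0e : A0 = ∅ := by
      have := (mem_powersetCard.1 (hA hA0)).2
      rwa [card_eq_zero] at this
    have hYDy : Y ∈ (ksubsets n l).filter (fun G => lexLE G Y) :=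
      mem_filter.2 ⟨hY1, lexLE_refl Y⟩
    have hBpos : 0 < B.card := lt_of_lt_of_le (card_pos.2 ⟨Y, hYDy⟩) hY2
    obtain ⟨B0, hB0⟩ := card_pos.1 hBpos
    have := h A0 hA0 B0 hB0
    rw [hA0e] at this
    simp at this
  by_cases hl : l = 0
  · exfalso
    subst hl
    have hYDy : Y ∈ (ksubsets n 0).filter (fun G => lexLE G Y) :=
      mem_filter.2 ⟨hY1, lexLE_refl Y⟩
    have hBpos : 0 < B.card := lt_of_lt_of_le (card_pos.2 ⟨Y, hYDy⟩) hY2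
    obtain ⟨B0, hB0⟩ := card_pos.1 hBpos
    have hB0e : B0 = ∅ := by
      have := (mem_powersetCard.1 (hB hB0)).2
      rwa [card_eq_zero] at this
    have hXDx : X ∈ (ksubsets n k).filter (fun G => lexLE G X) :=
      mem_filter.2 ⟨hX1, lexLE_refl X⟩
    have hApos : 0 < A.card := lt_of_lt_of_le (card_pos.2 ⟨X, hXDx⟩) hX2
    obtain ⟨A0, hA0⟩ := card_pos.1 hApos
    have := h A0 hA0 B0 hB0
    rw [hB0e] at this
    simp at this
  by_cases hn : n < k + l
  · -- any k-set and l-set of [1,n] intersect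
    obtain ⟨hXs, hXc⟩ := mem_powersetCard.1 hX1
    obtain ⟨hYs, hYc⟩ := mem_powersetCard.1 hY1
    have hu : (X ∪ Y).card ≤ n := by
      have h1 : X ∪ Y ⊆ Icc 1 n := union_subset hXs hYs
      have h2 := card_le_card h1
      rwa [Nat.card_Icc, Nat.add_sub_cancel] at h2
    have := card_inter_add_card_union X Y
    rw [← card_pos]
    omega
  · obtain ⟨m, rfl⟩ : ∃ m, n = m + 1 := ⟨n - 1, by omega⟩
    exact core m k l (by omega) A B hA hB h X Y hX1 hY1 hX2 hY2
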